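/- Let X be the random variable that takes value √((1-p)/p) with probability p and -√(p/(1-p)) with probability 1-p, where 0 < p ≤ 1/2. Then for every integer k ≥ 1, |E[X^k]| ≤ (√((1-p)/p))^{k-2}. -/

import Mathlib

theorem stmt2 (p : ℝ) (hp0 : 0 < p) (hp : p ≤ 1 / 2) (k : ℕ) (hk : 1 ≤ k) :
    |p * Real.sqrt ((1 - p) / p) ^ k + (1 - p) * (-Real.sqrt (p / (1 - p))) ^ k|
      ≤ Real.sqrt ((1 - p) / p) ^ ((k : ℤ) - 2) := by
  have h1p : 0 < 1 - p := by linarith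
  set a := Real.sqrt ((1 - p) / p) with ha
  set b := Real.sqrt (p / (1 - p)) with hb
  have ha0 : 0 < a := Real.sqrt_pos.2 (by positivity)
  have hb0 : 0 < b := Real.sqrt_pos.2 (by positivity)
  have ha2 : a ^ 2 = (1 - p) / p := Real.sq_sqrt (by positivity)
  have hb2 : b ^ 2 = p / (1 - p) := Real.sq_sqrt (by positivity)
  have hba : b ≤ a := Real.sqrt_le_sqrt (by
    rw [div_le_div_iff₀ h1p hp0]; nlinarith)
  rcases Nat.lt_or_ge k 2 with h2 | h2
  · interval_cases k
    have hpa : p * a = Real.sqrt (p * (1 - p)) := by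
      rw [ha, show p * (1 - p) = p ^ 2 * ((1 - p) / p) by field_simp,
        Real.sqrt_mul (by positivity), Real.sqrt_sq hp0.le]
    have hpb : (1 - p) * b = Real.sqrt (p * (1 - p)) := by
      rw [hb, show p * (1 - p) = (1 - p) ^ 2 * (p / (1 - p)) by field_simp,
        Real.sqrt_mul (by positivity), Real.sqrt_sq h1p.le]
    have hz : p * a ^ 1 + (1 - p) * (-b) ^ 1 = 0 := by
      simp only [pow_one]; rw [mul_neg, hpa, hpb]; ring
    rw [hz, abs_zero]
    positivity
  · obtain ⟨m, rfl⟩ : ∃ m, k = m + 2 := ⟨k - 2, by omega⟩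
    have hexp : ((m + 2 : ℕ) : ℤ) - 2 = (m : ℤ) := by push_cast; ring
    rw [hexp, zpow_natCast]
    have key : p * a ^ (m + 2) + (1 - p) * b ^ (m + 2) ≤ a ^ m := by
      have h1 : p * a ^ (m + 2) = (1 - p) * a ^ m := by
        rw [pow_add, ha2]; field_simp
      have h2 : (1 - p) * b ^ (m + 2) = p * b ^ m := by
        rw [pow_add, hb2]; field_simp
      have h3 : b ^ m ≤ a ^ m := pow_le_pow_left₀ hb0.le hba m
      rw [h1, h2]; nlinarith
    refine (abs_add_le _ _).trans ?_
    rw [abs_of_nonneg (by positivity), abs_mul, abs_pow, abs_neg,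
      abs_of_pos hb0, abs_of_pos h1p]
    exact key
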